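/- Let l ≥ 1. The map C : {0, ..., 2^l − 1} → {0, ..., 2^l − 1} defined by C(x') = (x'(x' + 1)/2) mod 2^l is a bijection. -/

import Mathlib

lemma tri_inj_aux (l x y : ℕ) (hy : y ≤ x) (hx : x < 2 ^ l)
    (h : x * (x + 1) / 2 % 2 ^ l = y * (y + 1) / 2 % 2 ^ l) : x = y := by
  have h2x : 2 ∣ x * (x + 1) := (Nat.even_mul_succ_self x).two_dvd
  have h2y : 2 ∣ y * (y + 1) := (Nat.even_mul_succ_self y).two_dvd
  have hmod : x * (x + 1) / 2 ≡ y * (y + 1) / 2 [MOD 2 ^ l] := h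
  have hmod2 : 2 * (x * (x + 1) / 2) ≡ 2 * (y * (y + 1) / 2) [MOD 2 * 2 ^ l] :=
    hmod.mul_left' 2
  rw [Nat.mul_div_cancel' h2x, Nat.mul_div_cancel' h2y] at hmod2
  have hdvd : 2 * 2 ^ l ∣ x * (x + 1) - y * (y + 1) :=
    (Nat.modEq_iff_dvd' (by nlinarith)).mp hmod2.symm
  have hfac : x * (x + 1) - y * (y + 1) = (x - y) * (x + y + 1) := by
    have hyx : y * (y + 1) ≤ x * (x + 1) := Nat.mul_le_mul hy (by omega)
    zify [hy, hyx]
    ring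
  rw [hfac] at hdvd
  rcases Nat.even_or_odd (x - y) with he | ho
  · have hodd : Odd (x + y + 1) := by
      rcases he with ⟨k, hk⟩
      exact ⟨x - k, by omega⟩
    have hcop : Nat.Coprime (2 * 2 ^ l) (x + y + 1) := by
      have : Nat.Coprime 2 (x + y + 1) :=
        Nat.coprime_two_left.mpr hodd
      exact Nat.Coprime.mul ‹_› (Nat.Coprime.pow_left _ ‹_›)
    have hdvd2 := (Nat.Coprime.dvd_of_dvd_mul_right hcop) hdvd
    rcases Nat.eq_zero_or_pos (x - y) with h0 | hpos
    · omega
    · have := Nat.le_of_dvd hpos hdvd2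
      omega
  · have hcop : Nat.Coprime (2 * 2 ^ l) (x - y) := by
      have : Nat.Coprime 2 (x - y) := Nat.coprime_two_left.mpr ho
      exact Nat.Coprime.mul ‹_› (Nat.Coprime.pow_left _ ‹_›)
    have hdvd2 := (Nat.Coprime.dvd_of_dvd_mul_left hcop) hdvd
    have := Nat.le_of_dvd (by omega) hdvd2
    omega

theorem triangular_coding_bijection (l : ℕ) (hl : 1 ≤ l) :
    Set.BijOn (fun x' : ℕ => (x' * (x' + 1) / 2) % 2 ^ l)
      (Set.Iio (2 ^ l)) (Set.Iio (2 ^ l)) := by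
  have hmaps : Set.MapsTo (fun x' : ℕ => (x' * (x' + 1) / 2) % 2 ^ l)
      (Set.Iio (2 ^ l)) (Set.Iio (2 ^ l)) := fun x _ =>
    Nat.mod_lt _ (Nat.pow_pos (by norm_num))
  have hfin : (Set.Iio (2 ^ l)).Finite := Set.finite_Iio _
  refine (hfin.injOn_iff_bijOn_of_mapsTo hmaps).mp ?_
  intro x hx y hy hxy
  simp only at hxy
  rcases le_total y x with h | h
  · exact tri_inj_aux l x y h hx hxy
  · exact (tri_inj_aux l y x h hy hxy.symm).symm
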